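/- Let w be a nonempty string, c a character with π(c·w) = ∞, and let g be the number of prefix-pal-groups of w, i.e., the number of suffix-pal-groups of reverse(w). Let t be a string with |t| ≥ |w| + 1 such that ssp_w is a prefix of ssp_{t[2..|t|]}. Then ssp_{c·w} is a prefix of ssp_t if and only if π(t) = ∞ or π(t) > g. -/

import Mathlib

open scoped ENat

variable {α : Type*}

/-- `w` is a palindrome. -/
def IsPal (w : List α) : Prop := w.reverse = w

/-- The substring `w[i..j]`, 1-indexed, inclusive; empty if `i > j`. -/
def sub (w : List α) (i j : ℕ) : List α := (w.take j).drop (i - 1)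

/-- Two strings of the same length pal-match: they agree on which substrings
`w[i..j]` (for `1 ≤ i < j ≤ |w|`) are palindromes. -/
def PalMatch (x y : List α) : Prop :=
  x.length = y.length ∧
    ∀ i j, 1 ≤ i → i < j → j ≤ x.length → (IsPal (sub x i j) ↔ IsPal (sub y i j))

/-- `sspAt w i` : length of the shortest palindromic suffix of `w[1..i]`
of length at least 2, or `∞` if none exists. -/
noncomputable def sspAt (w : List α) (i : ℕ) : ℕ∞ :=
  sInf {ℓ : ℕ∞ | ∃ u : List α, u <:+ w.take i ∧ IsPal u ∧ 2 ≤ u.length ∧ (u.length : ℕ∞) = ℓ}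

/-- The ssp-encoding of `w` as a sequence of length `|w|` over `ℕ ∪ {∞}`. -/
noncomputable def ssp (w : List α) : List ℕ∞ :=
  (List.range w.length).map fun k => sspAt w (k + 1)

/-- The palindromic proper suffixes of `w` (including the empty suffix). -/
def palSufs (w : List α) : Set (List α) :=
  {u | u <:+ w ∧ IsPal u ∧ u.length < w.length}

/-- The suffix-pal-groups of `w`, identified with the character `w[|w|-|u|]`
immediately to the left of their members. -/
def palSufGroups (w : List α) : Set (Option α) :=
  {c | ∃ u ∈ palSufs w, w[w.length - u.length - 1]? = c}

/-- Length of the representative (shortest member) of the suffix-pal-group of `w`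
whose members have the character `c` immediately to their left. -/
noncomputable def repLen (w : List α) (c : Option α) : ℕ :=
  sInf {ℓ : ℕ | ∃ u ∈ palSufs w, w[w.length - u.length - 1]? = c ∧ u.length = ℓ}

/-- The 1-based identifier of the suffix-pal-group of `w` with left character `c`:
identifiers are assigned in increasing order of the representatives' lengths. -/
noncomputable def groupIdOf (w : List α) (c : Option α) : ℕ :=
  Set.ncard {c' | c' ∈ palSufGroups w ∧ repLen w c' ≤ repLen w c}

/-- `sspgAt w i` : `∞` if `sspAt w i = ∞`, and otherwise the identifier of the
suffix-pal-group of `w[1..i-1]` containing the palindromic suffix of `w[1..i-1]`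
of length `sspAt w i - 2`. -/
noncomputable def sspgAt (w : List α) (i : ℕ) : ℕ∞ :=
  if sspAt w i = ⊤ then ⊤
  else (groupIdOf (w.take (i - 1))
        ((w.take (i - 1))[(i - 1) - ((sspAt w i).toNat - 2) - 1]?) : ℕ∞)

/-- `π(w) = sspg_{reverse w}[|w|]`. -/
noncomputable def piEnc (w : List α) : ℕ∞ := sspgAt w.reverse w.length

def PS (x : List α) (j ℓ : ℕ) : Prop :=
  ℓ ≤ j ∧ j ≤ x.length ∧ ∀ k, k < ℓ → x[j - ℓ + k]? = x[j - 1 - k]?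

lemma getElem?_take' (x : List α) {n i : ℕ} (h : i < n) : (x.take n)[i]? = x[i]? := by
  simp [List.getElem?_take, h]

lemma isPal_iff_getElem? (u : List α) :
    IsPal u ↔ ∀ k, k < u.length → u[k]? = u[u.length - 1 - k]? := by
  constructor
  · intro h k hk
    conv_lhs => rw [← h]
    exact List.getElem?_reverse hk
  · intro h
    apply List.ext_getElem?
    intro n
    by_cases hn : n < u.length
    · rw [List.getElem?_reverse hn, (h _ hn).symm]
    · rw [List.getElem?_eq_none (by simpa using not_lt.mp hn),
        List.getElem?_eq_none (by simpa using not_lt.mp hn)]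

lemma ps_iff_exists (x : List α) (j ℓ : ℕ) (hj : j ≤ x.length) :
    PS x j ℓ ↔ ∃ u, u <:+ x.take j ∧ IsPal u ∧ u.length = ℓ := by
  constructor
  · rintro ⟨hlj, -, hpal⟩
    have hlen : ((x.take j).drop (j - ℓ)).length = ℓ := by
      simp [List.length_drop, List.length_take]
      omega
    refine ⟨(x.take j).drop (j - ℓ), List.drop_suffix _ _, ?_, hlen⟩
    rw [isPal_iff_getElem?]
    intro k hk
    rw [hlen] at hk ⊢
    rw [List.getElem?_drop, List.getElem?_drop]
    rw [getElem?_take' _ (by omega), getElem?_take' _ (by omega)]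
    have h2 : j - ℓ + (ℓ - 1 - k) = j - 1 - k := by omega
    rw [h2]
    exact hpal k hk
  · rintro ⟨u, hsuf, hpal, hlen⟩
    have hle : ℓ ≤ j := by
      have := hsuf.length_le
      simp [List.length_take] at this
      omega
    refine ⟨hle, hj, ?_⟩
    have hu : u = (x.take j).drop (j - ℓ) := by
      rw [List.suffix_iff_eq_drop] at hsuf
      rw [hsuf, hlen]
      congr 1
      simp [List.length_take]; omega
    have hL : ((x.take j).drop (j - ℓ)).length = ℓ := by
      simp [List.length_drop, List.length_take]; omega
    rw [isPal_iff_getElem?] at hpal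
    intro k hk
    have hk' : k < u.length := by omega
    have h5 := hpal k hk'
    rw [hu, hL] at h5
    rw [List.getElem?_drop, List.getElem?_drop] at h5
    rw [getElem?_take' _ (by omega), getElem?_take' _ (by omega)] at h5
    convert h5 using 2 <;> omega

lemma ps_zero (x : List α) (j : ℕ) (hj : j ≤ x.length) : PS x j 0 :=
  ⟨Nat.zero_le _, hj, fun k hk => by omega⟩

lemma ps_one (x : List α) (j : ℕ) (hj : j ≤ x.length) (h1 : 1 ≤ j) : PS x j 1 :=
  ⟨h1, hj, fun k hk => by interval_cases k; simp⟩

lemma ps_extend (x : List α) (j ℓ : ℕ) :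
    PS x (j+1) (ℓ+2) ↔ ℓ + 2 ≤ j + 1 ∧ j + 1 ≤ x.length ∧ PS x j ℓ ∧ x[j - 1 - ℓ]? = x[j]? := by
  constructor
  · rintro ⟨h1, h2, hp⟩
    refine ⟨h1, h2, ⟨by omega, by omega, ?_⟩, ?_⟩
    · intro k hk
      have h5 := hp (k+1) (by omega)
      convert h5 using 2 <;> omega
    · have h5 := hp 0 (by omega)
      convert h5 using 2 <;> omega
  · rintro ⟨h1, h2, ⟨-, -, hp⟩, hc⟩
    refine ⟨h1, h2, ?_⟩
    intro k hk
    by_cases h0 : k = 0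
    · subst h0
      convert hc using 2 <;> omega
    by_cases hl : k = ℓ + 1
    · subst hl
      convert hc.symm using 2 <;> omega
    · have h5 := hp (k-1) (by omega)
      convert h5 using 2 <;> omega

lemma gcast (x : List α) {i i' : ℕ} (h : i = i') : x[i]? = x[i']? := by rw [h]

lemma ps_sub {x : List α} {j a b : ℕ} (hb : PS x j b) (hab : a ≤ b) (ha : PS x j a) :
    PS x (j - b + a) a := by
  obtain ⟨hbj, hjx, hbp⟩ := hb
  obtain ⟨-, -, hap⟩ := ha
  refine ⟨by omega, by omega, ?_⟩
  intro k hk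
  calc x[j - b + a - a + k]?
      = x[j - b + k]? := gcast x (by omega)
    _ = x[j - 1 - k]? := hbp k (by omega)
    _ = x[j - a + k]? := (hap k hk).symm
    _ = x[j - 1 - (a - 1 - k)]? := gcast x (by omega)
    _ = x[j - b + (a - 1 - k)]? := (hbp (a - 1 - k) (by omega)).symm
    _ = x[j - b + a - 1 - k]? := gcast x (by omega)

lemma ps_mirror {x : List α} {j i : ℕ} (hj : PS x j j) (hij : i ≤ j) :
    PS x i i ↔ PS x j i := by
  obtain ⟨-, hjx, hjp⟩ := hj
  constructor
  · rintro ⟨-, -, hip⟩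
    refine ⟨hij, hjx, ?_⟩
    intro k hk
    calc x[j - i + k]?
        = x[j - j + (j - i + k)]? := gcast x (by omega)
      _ = x[j - 1 - (j - i + k)]? := hjp (j - i + k) (by omega)
      _ = x[i - 1 - k]? := gcast x (by omega)
      _ = x[i - i + k]? := (hip k hk).symm
      _ = x[j - j + k]? := gcast x (by omega)
      _ = x[j - 1 - k]? := hjp k (by omega)
  · rintro ⟨-, -, hip⟩
    refine ⟨le_refl _, by omega, ?_⟩
    intro k hk
    calc x[i - i + k]?
        = x[j - j + k]? := gcast x (by omega)
      _ = x[j - 1 - k]? := hjp k (by omega)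
      _ = x[j - i + k]? := (hip k hk).symm
      _ = x[j - j + (j - i + k)]? := gcast x (by omega)
      _ = x[j - 1 - (j - i + k)]? := hjp (j - i + k) (by omega)
      _ = x[i - 1 - k]? := gcast x (by omega)

lemma ps_chars {x : List α} {j a b : ℕ} (hab : a < b) (hbj : b + 1 ≤ j)
    (ha : PS x j a) (hb : PS x j b) :
    x[j - a - 1]? = x[j - b - 1]? ↔ PS x (j - b + a + 1) (a + 2) := by
  have hsub := ps_sub hb (le_of_lt hab) ha
  have hjx := hb.2.1
  have hca : x[j - b + a]? = x[j - 1 - a]? := hb.2.2 a hab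
  have key : x[j - b + a]? = x[j - a - 1]? := hca.trans (gcast x (by omega))
  have e0 : j - b + a + 1 = (j - b + a) + 1 := rfl
  rw [e0, ps_extend]
  constructor
  · intro h
    refine ⟨by omega, by omega, hsub, ?_⟩
    calc x[j - b + a - 1 - a]?
        = x[j - b - 1]? := gcast x (by omega)
      _ = x[j - a - 1]? := h.symm
      _ = x[j - b + a]? := key.symm
  · rintro ⟨-, -, -, h⟩
    calc x[j - a - 1]?
        = x[j - b + a]? := key.symm
      _ = x[j - b + a - 1 - a]? := h.symm
      _ = x[j - b - 1]? := gcast x (by omega)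

lemma ps_drop {x : List α} {j ℓ : ℕ} (hℓ : ℓ + 1 ≤ j) (hjx : j ≤ x.length) :
    PS x j ℓ ↔ PS (x.drop 1) (j - 1) ℓ := by
  constructor
  · rintro ⟨h1, h2, hp⟩
    refine ⟨by omega, by rw [List.length_drop]; omega, ?_⟩
    intro k hk
    rw [List.getElem?_drop, List.getElem?_drop]
    calc x[1 + (j - 1 - ℓ + k)]?
        = x[j - ℓ + k]? := gcast x (by omega)
      _ = x[j - 1 - k]? := hp k hk
      _ = x[1 + (j - 1 - 1 - k)]? := gcast x (by omega)
  · rintro ⟨h1, h2, hp⟩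
    refine ⟨by omega, hjx, ?_⟩
    intro k hk
    have h5 := hp k hk
    rw [List.getElem?_drop, List.getElem?_drop] at h5
    calc x[j - ℓ + k]?
        = x[1 + (j - 1 - ℓ + k)]? := gcast x (by omega)
      _ = x[1 + (j - 1 - 1 - k)]? := h5
      _ = x[j - 1 - k]? := gcast x (by omega)

lemma sspAt_set_eq (x : List α) (j : ℕ) (hj : j ≤ x.length) :
    {ℓ : ℕ∞ | ∃ u : List α, u <:+ x.take j ∧ IsPal u ∧ 2 ≤ u.length ∧ (u.length : ℕ∞) = ℓ}
      = {ℓ : ℕ∞ | ∃ m : ℕ, ℓ = (m : ℕ∞) ∧ 2 ≤ m ∧ PS x j m} := by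
  ext ℓ
  simp only [Set.mem_setOf_eq]
  constructor
  · rintro ⟨u, hsuf, hpal, h2, hℓ⟩
    exact ⟨u.length, hℓ.symm, h2, (ps_iff_exists x j u.length hj).mpr ⟨u, hsuf, hpal, rfl⟩⟩
  · rintro ⟨m, rfl, h2, hps⟩
    obtain ⟨u, hsuf, hpal, hlen⟩ := (ps_iff_exists x j m hj).mp hps
    exact ⟨u, hsuf, hpal, by omega, by rw [hlen]⟩

lemma sspAt_eq_top_iff (x : List α) (j : ℕ) (hj : j ≤ x.length) :
    sspAt x j = ⊤ ↔ ∀ m : ℕ, 2 ≤ m → ¬ PS x j m := by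
  rw [sspAt, sspAt_set_eq x j hj, sInf_eq_top]
  constructor
  · intro h m h2 hps
    have := h (m : ℕ∞) ⟨m, rfl, h2, hps⟩
    exact (ENat.coe_ne_top m) this
  · rintro h ℓ ⟨m, rfl, h2, hps⟩
    exact absurd hps (h m h2)

lemma sspAt_le (x : List α) (j m : ℕ) (hj : j ≤ x.length) (h2 : 2 ≤ m) (hps : PS x j m) :
    sspAt x j ≤ (m : ℕ∞) := by
  rw [sspAt, sspAt_set_eq x j hj]
  exact sInf_le ⟨m, rfl, h2, hps⟩

lemma sspAt_spec (x : List α) (j : ℕ) (hj : j ≤ x.length) (h : sspAt x j ≠ ⊤) :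
    ∃ m : ℕ, sspAt x j = (m : ℕ∞) ∧ 2 ≤ m ∧ PS x j m ∧
      ∀ m' : ℕ, 2 ≤ m' → PS x j m' → m ≤ m' := by
  have hne : {ℓ : ℕ∞ | ∃ m : ℕ, ℓ = (m : ℕ∞) ∧ 2 ≤ m ∧ PS x j m}.Nonempty := by
    by_contra hcon
    rw [Set.not_nonempty_iff_eq_empty] at hcon
    apply h
    rw [sspAt, sspAt_set_eq x j hj, hcon]
    exact sInf_empty
  have hmem := csInf_mem hne
  have heq : sspAt x j = sInf {ℓ : ℕ∞ | ∃ m : ℕ, ℓ = (m : ℕ∞) ∧ 2 ≤ m ∧ PS x j m} := by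
    rw [sspAt, sspAt_set_eq x j hj]
  rw [← heq] at hmem
  obtain ⟨m, hm, h2, hps⟩ := hmem
  refine ⟨m, hm, h2, hps, ?_⟩
  intro m' h2' hps'
  have := sspAt_le x j m' hj h2' hps'
  rw [hm] at this
  exact_mod_cast this

lemma ps_le_len {x : List α} {j m : ℕ} (h : PS x j m) : m ≤ j := h.1

lemma ps_cast (x : List α) {j j' ℓ ℓ' : ℕ} (hj : j = j') (hl : ℓ = ℓ') :
    PS x j ℓ ↔ PS x j' ℓ' := by rw [hj, hl]

lemma ps_rec (x : List α) {j ℓ : ℕ} (h2 : 2 ≤ ℓ) (hℓj : ℓ ≤ j) (hjx : j ≤ x.length) :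
    PS x j ℓ ↔ sspAt x j ≤ (ℓ : ℕ∞) ∧ (sspAt x j = (ℓ : ℕ∞) ∨
      (PS x (j-1) (ℓ-2) ∧ PS x (j - ℓ + (sspAt x j).toNat) ((sspAt x j).toNat))) := by
  constructor
  · intro hps
    have hle : sspAt x j ≤ (ℓ : ℕ∞) := sspAt_le x j ℓ hjx h2 hps
    have hne : sspAt x j ≠ ⊤ := by
      intro h; rw [h] at hle; exact (ENat.coe_ne_top ℓ) (top_le_iff.mp hle)
    obtain ⟨m, hm, hm2, hmps, hmin⟩ := sspAt_spec x j hjx hne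
    have htn : (sspAt x j).toNat = m := by rw [hm]; simp
    have hmℓ : m ≤ ℓ := hmin ℓ h2 hps
    refine ⟨hle, ?_⟩
    by_cases heq : ℓ = m
    · left; rw [hm]; exact_mod_cast heq.symm
    right
    have hmlt : m < ℓ := lt_of_le_of_ne hmℓ (fun h => heq h.symm)
    obtain ⟨-, -, hin, hch⟩ := (ps_extend x (j-1) (ℓ-2)).mp
      ((ps_cast x (by omega) (by omega)).mp hps)
    obtain ⟨-, -, hinm, hchm⟩ := (ps_extend x (j-1) (m-2)).mp
      ((ps_cast x (by omega) (by omega)).mp hmps)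
    refine ⟨hin, ?_⟩
    have hchars := ps_chars (x := x) (j := j-1) (a := m-2) (b := ℓ-2)
      (by omega) (by omega) hinm hin
    have hkey : x[(j-1) - (m-2) - 1]? = x[(j-1) - (ℓ-2) - 1]? := by
      calc x[(j-1) - (m-2) - 1]?
          = x[j - 1 - 1 - (m-2)]? := gcast x (by omega)
        _ = x[j-1]? := hchm
        _ = x[j - 1 - 1 - (ℓ-2)]? := hch.symm
        _ = x[(j-1) - (ℓ-2) - 1]? := gcast x (by omega)
    have := hchars.mp hkey
    rw [htn]
    exact (ps_cast x (by omega) (by omega)).mp this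
  · rintro ⟨hle, hdisj⟩
    have hne : sspAt x j ≠ ⊤ := by
      intro h; rw [h] at hle; exact (ENat.coe_ne_top ℓ) (top_le_iff.mp hle)
    obtain ⟨m, hm, hm2, hmps, hmin⟩ := sspAt_spec x j hjx hne
    have htn : (sspAt x j).toNat = m := by rw [hm]; simp
    rcases hdisj with heq | ⟨hin, hrec⟩
    · have : ℓ = m := by rw [hm] at heq; exact_mod_cast heq.symm
      rw [this]; exact hmps
    rw [htn] at hrec
    have hmℓ : m ≤ ℓ := by rw [hm] at hle; exact_mod_cast hle
    by_cases heq : ℓ = m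
    · rw [heq]; exact hmps
    have hmlt : m < ℓ := lt_of_le_of_ne hmℓ (fun h => heq h.symm)
    obtain ⟨-, -, hinm, hchm⟩ := (ps_extend x (j-1) (m-2)).mp
      ((ps_cast x (by omega) (by omega)).mp hmps)
    have hchars := ps_chars (x := x) (j := j-1) (a := m-2) (b := ℓ-2)
      (by omega) (by omega) hinm hin
    have hkey := hchars.mpr ((ps_cast x (by omega) (by omega)).mp hrec)
    apply (ps_cast x (show ((j-1)+1) = j by omega) (show ((ℓ-2)+2) = ℓ by omega)).mp
    rw [ps_extend]
    refine ⟨by omega, by omega, hin, ?_⟩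
    calc x[j - 1 - 1 - (ℓ-2)]?
        = x[(j-1) - (ℓ-2) - 1]? := gcast x (by omega)
      _ = x[(j-1) - (m-2) - 1]? := hkey.symm
      _ = x[j - 1 - 1 - (m-2)]? := gcast x (by omega)
      _ = x[j-1]? := hchm

lemma ps_transfer {x y : List α} {n : ℕ} (hx : n ≤ x.length) (hy : n ≤ y.length)
    (hssp : ∀ j, 1 ≤ j → j ≤ n → sspAt x j = sspAt y j) :
    ∀ j ℓ, j ≤ n → (PS x j ℓ ↔ PS y j ℓ) := by
  intro j
  induction j using Nat.strong_induction_on with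
  | _ j IH =>
    intro ℓ hjn
    by_cases h0 : ℓ = 0
    · subst h0
      exact ⟨fun _ => ps_zero y j (hjn.trans hy), fun _ => ps_zero x j (hjn.trans hx)⟩
    by_cases h1 : ℓ = 1
    · subst h1
      by_cases hj0 : j = 0
      · subst hj0
        exact ⟨fun h => absurd h.1 (by omega), fun h => absurd h.1 (by omega)⟩
      · exact ⟨fun _ => ps_one y j (hjn.trans hy) (by omega),
          fun _ => ps_one x j (hjn.trans hx) (by omega)⟩
    have h2 : 2 ≤ ℓ := by omega
    by_cases hℓj : ℓ ≤ j
    swap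
    · exact ⟨fun h => absurd h.1 hℓj, fun h => absurd h.1 hℓj⟩
    have hj1 : 1 ≤ j := by omega
    have hs := hssp j hj1 hjn
    rw [ps_rec x h2 hℓj (hjn.trans hx), ps_rec y h2 hℓj (hjn.trans hy), hs]
    by_cases hne : sspAt y j = ⊤
    · rw [hne]
      simp
    obtain ⟨m, hm, hm2, -, -⟩ := sspAt_spec y j (hjn.trans hy) hne
    rw [hm]
    have htn : ((m : ℕ∞)).toNat = m := by simp
    rw [htn]
    by_cases hmℓ : m < ℓ
    · have hiff1 := IH (j-1) (by omega) (ℓ-2) (by omega)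
      have hiff2 := IH (j - ℓ + m) (by omega) m (by omega)
      rw [hiff1, hiff2]
    · by_cases hle : (m : ℕ∞) ≤ (ℓ : ℕ∞)
      · have : m = ℓ := by
          have : m ≤ ℓ := by exact_mod_cast hle
          omega
        subst this
        simp [hle]
      · simp [hle]

lemma natInf_top {Q : ℕ → Prop} :
    sInf {ℓ : ℕ∞ | ∃ m : ℕ, ℓ = (m : ℕ∞) ∧ Q m} = ⊤ ↔ ∀ m, ¬ Q m := by
  rw [sInf_eq_top]
  constructor
  · intro h m hq
    exact (ENat.coe_ne_top m) (h (m : ℕ∞) ⟨m, rfl, hq⟩)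
  · rintro h ℓ ⟨m, rfl, hq⟩
    exact absurd hq (h m)

lemma natInf_le {Q : ℕ → Prop} {m : ℕ} (h : Q m) :
    sInf {ℓ : ℕ∞ | ∃ m : ℕ, ℓ = (m : ℕ∞) ∧ Q m} ≤ (m : ℕ∞) :=
  sInf_le ⟨m, rfl, h⟩

lemma natInf_spec {Q : ℕ → Prop}
    (h : sInf {ℓ : ℕ∞ | ∃ m : ℕ, ℓ = (m : ℕ∞) ∧ Q m} ≠ ⊤) :
    ∃ m : ℕ, sInf {ℓ : ℕ∞ | ∃ m : ℕ, ℓ = (m : ℕ∞) ∧ Q m} = (m : ℕ∞) ∧ Q m ∧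
      ∀ m', Q m' → m ≤ m' := by
  have hne : {ℓ : ℕ∞ | ∃ m : ℕ, ℓ = (m : ℕ∞) ∧ Q m}.Nonempty := by
    by_contra hcon
    rw [Set.not_nonempty_iff_eq_empty] at hcon
    rw [hcon, sInf_empty] at h
    exact h rfl
  obtain ⟨m, hm, hq⟩ := csInf_mem hne
  refine ⟨m, hm, hq, ?_⟩
  intro m' hq'
  have := natInf_le (Q := Q) hq'
  rw [hm] at this
  exact_mod_cast this

lemma pp_iff_prefix (x : List α) (m : ℕ) :
    (∃ u, u <+: x ∧ IsPal u ∧ u.length = m) ↔ PS x m m := by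
  constructor
  · rintro ⟨u, hpre, hpal, hlen⟩
    have hm : m ≤ x.length := hlen ▸ hpre.length_le
    rw [ps_iff_exists x m m hm]
    refine ⟨u, ?_, hpal, hlen⟩
    rw [List.prefix_iff_eq_take] at hpre
    rw [hpre, hlen]
  · intro hps
    have hm : m ≤ x.length := hps.2.1
    obtain ⟨u, hsuf, hpal, hlen⟩ := (ps_iff_exists x m m hm).mp hps
    refine ⟨u, ?_, hpal, hlen⟩
    have : u = x.take m := by
      rw [List.suffix_iff_eq_drop] at hsuf
      rw [hsuf, hlen]
      simp [List.length_take]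
    rw [this]
    exact List.take_prefix _ _

lemma suffix_reverse_iff (u x : List α) : u <:+ x.reverse ↔ u.reverse <+: x := by
  constructor
  · intro h
    have := List.reverse_prefix.mpr h
    rwa [List.reverse_reverse] at this
  · intro h
    have : u.reverse <+: x.reverse.reverse := by rwa [List.reverse_reverse]
    exact List.reverse_prefix.mp this

lemma isPal_reverse {u : List α} (h : IsPal u) : IsPal u.reverse :=
  congrArg List.reverse h

lemma sspAt_reverse_eq (x : List α) :
    sspAt x.reverse x.length
      = sInf {ℓ : ℕ∞ | ∃ m : ℕ, ℓ = (m : ℕ∞) ∧ 2 ≤ m ∧ PS x m m} := by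
  rw [sspAt]
  congr 1
  ext ℓ
  simp only [Set.mem_setOf_eq]
  have htake : x.reverse.take x.length = x.reverse := by
    exact List.take_of_length_le (by simp)
  rw [htake]
  constructor
  · rintro ⟨u, hsuf, hpal, h2, hℓ⟩
    refine ⟨u.length, hℓ.symm, h2, ?_⟩
    rw [← pp_iff_prefix]
    refine ⟨u.reverse, (suffix_reverse_iff u x).mp hsuf, isPal_reverse hpal, ?_⟩
    rw [List.length_reverse]
  · rintro ⟨m, rfl, h2, hps⟩
    obtain ⟨u, hpre, hpal, hlen⟩ := (pp_iff_prefix x m).mpr hps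
    refine ⟨u.reverse, ?_, isPal_reverse hpal, ?_, ?_⟩
    · rw [suffix_reverse_iff, List.reverse_reverse]
      exact hpre
    · rw [List.length_reverse]; omega
    · rw [List.length_reverse, hlen]

lemma mem_palSufs_reverse (z u : List α) :
    u ∈ palSufs z.reverse ↔ u.reverse <+: z ∧ IsPal u ∧ u.length < z.length := by
  rw [palSufs, Set.mem_setOf_eq, suffix_reverse_iff, List.length_reverse]

lemma rev_char_eq (z : List α) {ℓ : ℕ} (hℓ : ℓ < z.length) :
    (z.reverse)[z.reverse.length - ℓ - 1]? = z[ℓ]? := by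
  rw [List.length_reverse]
  rw [List.getElem?_reverse (by omega)]
  exact gcast z (by omega)

lemma palSuf_elem_iff (z : List α) (ℓ : ℕ) :
    (∃ u, u ∈ palSufs z.reverse ∧ u.length = ℓ) ↔ (ℓ < z.length ∧ PS z ℓ ℓ) := by
  constructor
  · rintro ⟨u, hu, rfl⟩
    rw [mem_palSufs_reverse] at hu
    obtain ⟨hpre, hpal, hlt⟩ := hu
    refine ⟨hlt, ?_⟩
    rw [← pp_iff_prefix]
    exact ⟨u.reverse, hpre, isPal_reverse hpal, List.length_reverse⟩
  · rintro ⟨hlt, hps⟩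
    obtain ⟨u, hpre, hpal, hlen⟩ := (pp_iff_prefix z ℓ).mpr hps
    refine ⟨u.reverse, ?_, by rw [List.length_reverse, hlen]⟩
    rw [mem_palSufs_reverse, List.reverse_reverse]
    exact ⟨hpre, isPal_reverse hpal, by rw [List.length_reverse]; omega⟩

lemma mem_palSufGroups_reverse (z : List α) (d : Option α) :
    d ∈ palSufGroups z.reverse ↔ ∃ ℓ, ℓ < z.length ∧ PS z ℓ ℓ ∧ z[ℓ]? = d := by
  rw [palSufGroups, Set.mem_setOf_eq]
  constructor
  · rintro ⟨u, hu, hc⟩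
    have h1 := (palSuf_elem_iff z u.length).mp ⟨u, hu, rfl⟩
    refine ⟨u.length, h1.1, h1.2, ?_⟩
    rw [← rev_char_eq z h1.1]
    exact hc
  · rintro ⟨ℓ, hlt, hps, hc⟩
    obtain ⟨u, hu, hlen⟩ := (palSuf_elem_iff z ℓ).mpr ⟨hlt, hps⟩
    refine ⟨u, hu, ?_⟩
    rw [hlen, rev_char_eq z hlt]
    exact hc

lemma repLen_reverse (z : List α) (d : Option α) :
    repLen z.reverse d = sInf {ℓ : ℕ | ℓ < z.length ∧ PS z ℓ ℓ ∧ z[ℓ]? = d} := by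
  rw [repLen]
  congr 1
  ext ℓ
  simp only [Set.mem_setOf_eq]
  constructor
  · rintro ⟨u, hu, hc, rfl⟩
    have h1 := (palSuf_elem_iff z u.length).mp ⟨u, hu, rfl⟩
    refine ⟨h1.1, h1.2, ?_⟩
    rw [← rev_char_eq z h1.1]
    exact hc
  · rintro ⟨hlt, hps, hc⟩
    obtain ⟨u, hu, hlen⟩ := (palSuf_elem_iff z ℓ).mpr ⟨hlt, hps⟩
    refine ⟨u, hu, ?_, hlen⟩
    rw [hlen, rev_char_eq z hlt]
    exact hc

lemma pp_char_iff {x : List α} {i j : ℕ} (hij : i < j) (hj : j + 1 ≤ x.length)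
    (hi : PS x i i) (hjp : PS x j j) : x[i]? = x[j]? ↔ PS x (j+1) (i+2) := by
  have hchar : x[j - 1 - i]? = x[i]? := by
    have h := hjp.2.2 i hij
    exact h.symm.trans (gcast x (by omega))
  rw [ps_extend]
  constructor
  · intro h
    exact ⟨by omega, hj, (ps_mirror hjp (by omega)).mp hi, hchar.trans h⟩
  · rintro ⟨-, -, -, h⟩
    exact hchar.symm.trans h

section Counting

variable {w y : List α} {n : ℕ}

lemma char_trans (hn : w.length = n) (hy : n ≤ y.length)
    (HT : ∀ j ℓ, j ≤ n → (PS w j ℓ ↔ PS y j ℓ))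
    {i j : ℕ} (hij : i ≤ j) (hjn : j < n) (hi : PS w i i) (hj : PS w j j) :
    (w[i]? = w[j]? ↔ y[i]? = y[j]?) := by
  rcases eq_or_lt_of_le hij with rfl | hlt
  · simp
  have hyi : PS y i i := (HT i i (by omega)).mp hi
  have hyj : PS y j j := (HT j j (by omega)).mp hj
  rw [pp_char_iff hlt (by omega) hi hj, pp_char_iff hlt (by omega) hyi hyj]
  exact HT (j+1) (i+2) (by omega)

lemma group_count (hn : w.length = n) (h1 : 1 ≤ n) (hy : n ≤ y.length)
    (HT : ∀ j ℓ, j ≤ n → (PS w j ℓ ↔ PS y j ℓ)) :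
    {d : Option α | (∃ ℓ, ℓ < y.length ∧ PS y ℓ ℓ ∧ y[ℓ]? = d) ∧
        sInf {ℓ : ℕ | ℓ < y.length ∧ PS y ℓ ℓ ∧ y[ℓ]? = d} ≤ n - 1}.ncard
      = {d : Option α | ∃ ℓ, ℓ < n ∧ PS w ℓ ℓ ∧ w[ℓ]? = d}.ncard := by
  classical
  set Sw : Set (Option α) := {d | ∃ ℓ, ℓ < n ∧ PS w ℓ ℓ ∧ w[ℓ]? = d} with hSw
  set rwp : Option α → ℕ := fun d => sInf {ℓ : ℕ | ℓ < n ∧ PS w ℓ ℓ ∧ w[ℓ]? = d} with hrwp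
  set rt : Option α → ℕ := fun d => sInf {ℓ : ℕ | ℓ < y.length ∧ PS y ℓ ℓ ∧ y[ℓ]? = d} with hrt
  set φ : Option α → Option α := fun d => y[rwp d]? with hφ
  have fw : ∀ d ∈ Sw, rwp d < n ∧ PS w (rwp d) (rwp d) ∧ w[rwp d]? = d := by
    rintro d ⟨ℓ, hℓ⟩
    exact Nat.sInf_mem (s := {ℓ : ℕ | ℓ < n ∧ PS w ℓ ℓ ∧ w[ℓ]? = d}) ⟨ℓ, hℓ⟩
  have hrteq : ∀ d ∈ Sw, rt (φ d) = rwp d := by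
    intro d hd
    obtain ⟨hlt, hps, hch⟩ := fw d hd
    have hymem : rwp d ∈ {ℓ : ℕ | ℓ < y.length ∧ PS y ℓ ℓ ∧ y[ℓ]? = φ d} :=
      ⟨by omega, (HT _ _ (by omega)).mp hps, rfl⟩
    have hle : rt (φ d) ≤ rwp d := Nat.sInf_le hymem
    obtain ⟨hm1, hm2, hm3⟩ := Nat.sInf_mem
      (s := {ℓ : ℕ | ℓ < y.length ∧ PS y ℓ ℓ ∧ y[ℓ]? = φ d}) ⟨rwp d, hymem⟩
    by_contra hne
    have hmlt : rt (φ d) < rwp d := by omega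
    have hmn : rt (φ d) < n := by omega
    have hwm : PS w (rt (φ d)) (rt (φ d)) := (HT _ _ (by omega)).mpr hm2
    have hcheq : w[rt (φ d)]? = w[rwp d]? :=
      (char_trans hn hy HT (by omega) hlt hwm hps).mpr hm3
    have : rwp d ≤ rt (φ d) :=
      Nat.sInf_le ⟨hmn, hwm, hcheq.trans hch⟩
    omega
  have himg : {d : Option α | (∃ ℓ, ℓ < y.length ∧ PS y ℓ ℓ ∧ y[ℓ]? = d) ∧
      rt d ≤ n - 1} = φ '' Sw := by
    ext d'
    simp only [Set.mem_setOf_eq, Set.mem_image]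
    constructor
    · rintro ⟨hd', hrle⟩
      have hmem := Nat.sInf_mem
        (s := {ℓ : ℕ | ℓ < y.length ∧ PS y ℓ ℓ ∧ y[ℓ]? = d'}) hd'
      obtain ⟨hm1, hm2, hm3⟩ := hmem
      have hmn : rt d' < n := by omega
      have hwm : PS w (rt d') (rt d') := (HT _ _ (by omega)).mpr hm2
      set d := w[rt d']? with hd
      have hdSw : d ∈ Sw := ⟨rt d', hmn, hwm, rfl⟩
      refine ⟨d, hdSw, ?_⟩
      obtain ⟨hl1, hl2, hl3⟩ := fw d hdSw
      have hrle2 : rwp d ≤ rt d' := Nat.sInf_le ⟨hmn, hwm, rfl⟩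
      have : y[rwp d]? = y[rt d']? :=
        (char_trans hn hy HT hrle2 hmn hl2 hwm).mp (hl3.trans hd)
      exact this.trans hm3
    · rintro ⟨d, hdSw, rfl⟩
      obtain ⟨hlt, hps, hch⟩ := fw d hdSw
      have h5 := hrteq d hdSw
      exact ⟨⟨rwp d, by omega, (HT _ _ (by omega)).mp hps, rfl⟩, by omega⟩
  have hinj : Set.InjOn φ Sw := by
    intro d1 h1' d2 h2' heq
    obtain ⟨ha1, ha2, ha3⟩ := fw d1 h1'
    obtain ⟨hb1, hb2, hb3⟩ := fw d2 h2'
    rcases le_total (rwp d1) (rwp d2) with hle | hle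
    · have := (char_trans hn hy HT hle hb1 ha2 hb2).mpr heq
      rw [ha3, hb3] at this
      exact this
    · have := (char_trans hn hy HT hle ha1 hb2 ha2).mpr heq.symm
      rw [ha3, hb3] at this
      exact this.symm
  rw [himg, Set.ncard_image_of_injOn hinj]

end Counting

lemma prefix_getElem? {l m : List α} (hp : l <+: m) {n : ℕ} (h : n < l.length) :
    l[n]? = m[n]? := by
  obtain ⟨s, rfl⟩ := hp
  rw [List.getElem?_append, if_pos h]

lemma ssp_prefix_iff (x z : List α) (h : x.length ≤ z.length) :
    ssp x <+: ssp z ↔ ∀ i, 1 ≤ i → i ≤ x.length → sspAt x i = sspAt z i := by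
  have hlx : (ssp x).length = x.length := by simp [ssp]
  have hlz : (ssp z).length = z.length := by simp [ssp]
  constructor
  · intro hpre i h1 h2
    have hget := prefix_getElem? hpre (n := i - 1) (by omega)
    rw [ssp, ssp, List.getElem?_map, List.getElem?_map,
      List.getElem?_range (by omega), List.getElem?_range (by omega)] at hget
    simp only [Option.map_some] at hget
    have he : i - 1 + 1 = i := by omega
    rw [he] at hget
    exact Option.some_injective _ hget
  · intro hiff
    rw [List.prefix_iff_eq_take]
    apply List.ext_getElem?
    intro k
    by_cases hk : k < x.length
    · rw [List.getElem?_take, if_pos (show k < (ssp x).length by omega)]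
      rw [ssp, ssp, List.getElem?_map, List.getElem?_map,
        List.getElem?_range (by omega), List.getElem?_range (by omega)]
      simp only [Option.map_some]
      rw [hiff (k+1) (by omega) (by omega)]
    · rw [List.getElem?_eq_none (by omega), List.getElem?_eq_none
        (by simp [List.length_take]; omega)]

lemma piEnc_top_iff (x : List α) : piEnc x = ⊤ ↔ sspAt x.reverse x.length = ⊤ := by
  rw [piEnc, sspgAt]
  split_ifs with h
  · simp [h]
  · simp [h, ENat.coe_ne_top]

lemma piEnc_val (x : List α) (h : ¬ sspAt x.reverse x.length = ⊤) :
    piEnc x = (groupIdOf (x.reverse.take (x.length - 1))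
      ((x.reverse.take (x.length - 1))[(x.length - 1)
        - ((sspAt x.reverse x.length).toNat - 2) - 1]?) : ℕ∞) := by
  rw [piEnc, sspgAt, if_neg h]

lemma sspAt_eq_top_small (x : List α) (hx : 1 ≤ x.length) : sspAt x 1 = ⊤ := by
  rw [sspAt_eq_top_iff x 1 hx]
  intro m h2 hps
  have := hps.1
  omega

lemma sspAt_cons_eq {c : α} {w : List α} {i : ℕ} (h2 : 2 ≤ i) (hi : i ≤ w.length + 1)
    (hk : ∀ m, 2 ≤ m → ¬ PS (c :: w) m m) :
    sspAt (c :: w) i = sspAt w (i - 1) := by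
  have hlen : (c :: w).length = w.length + 1 := rfl
  rw [sspAt, sspAt_set_eq (c::w) i (by omega), sspAt, sspAt_set_eq w (i-1) (by omega)]
  congr 1
  ext ℓ
  simp only [Set.mem_setOf_eq]
  constructor
  · rintro ⟨m, rfl, hm2, hps⟩
    refine ⟨m, rfl, hm2, ?_⟩
    have hmi : m ≤ i := hps.1
    by_cases hmeq : m = i
    · subst hmeq
      exact absurd hps (hk m hm2)
    · have := (ps_drop (by omega) (by omega)).mp hps
      simpa using this
  · rintro ⟨m, rfl, hm2, hps⟩
    refine ⟨m, rfl, hm2, ?_⟩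
    have hmi : m ≤ i - 1 := hps.1
    apply (ps_drop (by omega) (by omega)).mpr
    simpa using hps

lemma sspAt_t_iff {t w : List α} {i : ℕ} (h2 : 2 ≤ i) (hi : i ≤ w.length + 1)
    (hN : w.length + 1 ≤ t.length)
    (hsw : sspAt w (i-1) = sspAt (t.drop 1) (i-1)) :
    (sspAt t i = sspAt w (i-1)) ↔ ¬(PS t i i ∧ sspAt w (i-1) = ⊤) := by
  have hylen : (t.drop 1).length = t.length - 1 := by simp
  have hjy : i - 1 ≤ (t.drop 1).length := by omega
  have hjw : i - 1 ≤ w.length := by omega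
  have hjt : i ≤ t.length := by omega
  by_cases htop : sspAt w (i-1) = ⊤
  · have hytop : sspAt (t.drop 1) (i-1) = ⊤ := by rw [← hsw]; exact htop
    have hnoy : ∀ m, 2 ≤ m → ¬ PS (t.drop 1) (i-1) m :=
      (sspAt_eq_top_iff _ _ hjy).mp hytop
    by_cases hq : PS t i i
    · apply iff_of_false
      · intro h
        rw [htop] at h
        have hle := sspAt_le t i i hjt h2 hq
        rw [h] at hle
        exact (ENat.coe_ne_top i) (top_le_iff.mp hle)
      · exact fun hr => hr ⟨hq, htop⟩
    · apply iff_of_true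
      · rw [htop]
        rw [sspAt_eq_top_iff t i hjt]
        intro m hm2 hps
        have hmi : m ≤ i := hps.1
        by_cases hmeq : m = i
        · subst hmeq; exact hq hps
        · exact hnoy m hm2 ((ps_drop (by omega) (by omega)).mp hps)
      · exact fun hr => hq hr.1
  · apply iff_of_true
    swap
    · exact fun hr => htop hr.2
    rw [hsw]
    have hytop : sspAt (t.drop 1) (i-1) ≠ ⊤ := by rw [← hsw]; exact htop
    obtain ⟨m0, hm0, h20, hps0, hmin0⟩ := sspAt_spec _ _ hjy hytop
    have hm0i : m0 ≤ i - 1 := hps0.1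
    have hps0t : PS t i m0 := (ps_drop (by omega) (by omega)).mpr (by simpa using hps0)
    have hle : sspAt t i ≤ (m0 : ℕ∞) := sspAt_le t i m0 hjt h20 hps0t
    have hne : sspAt t i ≠ ⊤ := by
      intro h; rw [h] at hle; exact (ENat.coe_ne_top m0) (top_le_iff.mp hle)
    obtain ⟨m1, hm1, h21, hps1, hmin1⟩ := sspAt_spec t i hjt hne
    have hm1m0 : m1 ≤ m0 := hmin1 m0 h20 hps0t
    have hpy : PS (t.drop 1) (i-1) m1 := (ps_drop (by omega) (by omega)).mp hps1
    have hm0m1 : m0 ≤ m1 := hmin0 m1 h21 hpy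
    rw [hm0, hm1]
    congr 1
    omega


/-- Backward search step, case `π(c·w) = ∞`: with `g` the number of prefix-pal-groups
of `w` (i.e. suffix-pal-groups of `reverse w`), for `t` with `|t| ≥ |w| + 1` such that
`ssp w` is a prefix of `ssp t[2..]`, `ssp (c·w)` is a prefix of `ssp t` iff
`π(t) = ∞` or `π(t) > g`. -/
theorem stmt16 {α : Type*} (w : List α) (hw : w ≠ []) (c : α)
    (hk : piEnc (c :: w) = ⊤)
    (g : ℕ) (hg : g = (palSufGroups w.reverse).ncard)
    (t : List α) (ht : w.length + 1 ≤ t.length)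
    (hpre : ssp w <+: ssp (t.drop 1)) :
    (ssp (c :: w) <+: ssp t ↔ piEnc t = ⊤ ∨ (g : ℕ∞) < piEnc t) := by
  classical
  set n := w.length with hn
  set N := t.length with hN
  set y := t.drop 1 with hy
  have hn1 : 1 ≤ n := List.length_pos_iff.mpr hw
  have hylen : y.length = N - 1 := by simp [hy, hN]
  have hny : n ≤ y.length := by omega
  have hN2 : 2 ≤ N := by omega
  -- hk reformulated
  have hcw_len : (c :: w).length = n + 1 := by simp [hn]
  have hk' : ∀ m, 2 ≤ m → ¬ PS (c :: w) m m := by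
    have h1 := (piEnc_top_iff (c :: w)).mp hk
    rw [sspAt_reverse_eq (c :: w)] at h1
    have h2 := natInf_top.mp h1
    intro m hm2 hps
    exact h2 m ⟨hm2, hps⟩
  -- pointwise ssp transfer
  have hw_y : ∀ j, 1 ≤ j → j ≤ n → sspAt w j = sspAt y j :=
    (ssp_prefix_iff w y hny).mp hpre
  have HT : ∀ j ℓ, j ≤ n → (PS w j ℓ ↔ PS y j ℓ) :=
    ps_transfer (le_refl n) hny hw_y
  -- LHS pointwise characterization
  have hLHS1 : (ssp (c :: w) <+: ssp t) ↔
      ∀ i, 1 ≤ i → i ≤ n + 1 → sspAt (c :: w) i = sspAt t i := by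
    rw [ssp_prefix_iff (c :: w) t (by rw [hcw_len]; omega), hcw_len]
  have hcons : ∀ i, 2 ≤ i → i ≤ n + 1 → sspAt (c :: w) i = sspAt w (i - 1) := by
    intro i h2 hi
    exact sspAt_cons_eq h2 (by omega) hk'
  have hLHS2 : (ssp (c :: w) <+: ssp t) ↔
      ∀ i, 2 ≤ i → i ≤ n + 1 → ¬(PS t i i ∧ sspAt w (i-1) = ⊤) := by
    rw [hLHS1]
    constructor
    · intro hpt i h2 hi
      have he : sspAt t i = sspAt w (i-1) := by
        rw [← hpt i (by omega) hi, hcons i h2 hi]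
      exact (sspAt_t_iff h2 hi ht (hw_y (i-1) (by omega) (by omega))).mp he
    · intro hna i h1 hi
      by_cases h2 : 2 ≤ i
      · rw [hcons i h2 hi]
        exact ((sspAt_t_iff h2 hi ht (hw_y (i-1) (by omega) (by omega))).mpr
          (hna i h2 hi)).symm
      · have hi1 : i = 1 := by omega
        subst hi1
        rw [sspAt_eq_top_small (c :: w) (by rw [hcw_len]; omega),
          sspAt_eq_top_small t (by omega)]
  -- the prefix-palindrome infimum of t
  set P : ℕ∞ := sInf {ℓ : ℕ∞ | ∃ m : ℕ, ℓ = (m : ℕ∞) ∧ 2 ≤ m ∧ PS t m m} with hP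
  have hPP : sspAt t.reverse N = P := sspAt_reverse_eq t
  have hLHS3 : (ssp (c :: w) <+: ssp t) ↔ ¬(P ≤ ((n + 1 : ℕ) : ℕ∞)) := by
    rw [hLHS2]
    constructor
    · intro hC hle
      have hne : P ≠ ⊤ := by
        intro h; rw [h] at hle
        exact (ENat.coe_ne_top (n+1)) (top_le_iff.mp hle)
      obtain ⟨p, hp, ⟨hp2, hpps⟩, hpmin⟩ :=
        natInf_spec (Q := fun m => 2 ≤ m ∧ PS t m m) (by rw [← hP]; exact hne)
      rw [← hP] at hp
      have hpn : p ≤ n + 1 := by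
        rw [hp] at hle; exact_mod_cast hle
      refine hC p hp2 hpn ⟨hpps, ?_⟩
      rw [sspAt_eq_top_iff w (p-1) (by omega)]
      intro m hm2 hps
      have hyps : PS y (p-1) m := (HT (p-1) m (by omega)).mp hps
      have hmp : m ≤ p - 1 := hps.1
      have hpt : p ≤ N := hpps.2.1
      have htps : PS t p m := (ps_drop (by omega) (by omega)).mpr
        ((ps_cast y (by omega) rfl).mp hyps)
      have hsubp : PS t m m := by
        have := ps_sub hpps (by omega : m ≤ p) htps
        exact (ps_cast t (by omega) rfl).mp this
      have hle2 : P ≤ (m : ℕ∞) := by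
        rw [hP]; exact natInf_le ⟨hm2, hsubp⟩
      have : p ≤ m := by rw [hp] at hle2; exact_mod_cast hle2
      omega
    · rintro hnle i h2 hi ⟨hq, -⟩
      apply hnle
      have : P ≤ ((i : ℕ) : ℕ∞) := by rw [hP]; exact natInf_le ⟨h2, hq⟩
      exact this.trans (by exact_mod_cast hi)
  rw [hLHS3]
  by_cases hPt : P = ⊤
  · apply iff_of_true
    · rw [hPt]
      intro hle
      exact (ENat.coe_ne_top (n+1)) (top_le_iff.mp hle)
    · left
      rw [piEnc_top_iff, hPP]
      exact hPt
  · -- finite case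
    have hpiEt : ¬ (piEnc t = ⊤) := by
      rw [piEnc_top_iff, hPP]; exact hPt
    obtain ⟨p, hp, ⟨hp2, hpps⟩, hpmin⟩ :=
      natInf_spec (Q := fun m => 2 ≤ m ∧ PS t m m) (by rw [← hP]; exact hPt)
    rw [← hP] at hp
    have hpN : p ≤ N := hpps.2.1
    -- c₀ and the group identifier
    have hvrev : t.reverse.take (t.length - 1) = y.reverse := by
      rw [← List.reverse_drop]
    have htn : (sspAt t.reverse t.length).toNat = p := by
      rw [← hN, hPP, hp]; simp
    have hpiv := piEnc_val t (by rw [← hN, hPP]; exact hPt)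
    rw [hvrev, htn] at hpiv
    set c₀ : Option α := (y.reverse)[(t.length - 1) - (p - 2) - 1]? with hc₀def
    have hplt : p - 2 < y.length := by omega
    have hc₀ : c₀ = y[p-2]? := by
      rw [hc₀def]
      rw [gcast y.reverse (show (t.length - 1) - (p - 2) - 1
        = y.reverse.length - (p-2) - 1 by simp [hylen, hN])]
      exact rev_char_eq y hplt
    -- PS y (p-2) (p-2)
    have hin : PS t (p-1) (p-2) := by
      obtain ⟨-, -, h', -⟩ := (ps_extend t (p-1) (p-2)).mp
        ((ps_cast t (by omega) (by omega)).mp hpps)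
      exact h'
    have hPSy : PS y (p-2) (p-2) := by
      have := (ps_drop (by omega) (by omega)).mp hin
      exact (ps_cast y (by omega) rfl).mp this
    have hchar_tp : t[0]? = t[p-1]? := by
      have h' := hpps.2.2 0 (by omega)
      calc t[0]? = t[p - p + 0]? := gcast t (by omega)
        _ = t[p - 1 - 0]? := h'
        _ = t[p-1]? := gcast t (by omega)
    -- rt c₀ = p - 2
    set rtc : ℕ := sInf {ℓ : ℕ | ℓ < y.length ∧ PS y ℓ ℓ ∧ y[ℓ]? = c₀} with hrtc
    have hmemc : (p - 2) ∈ {ℓ : ℕ | ℓ < y.length ∧ PS y ℓ ℓ ∧ y[ℓ]? = c₀} :=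
      ⟨hplt, hPSy, hc₀.symm⟩
    have hrt_le : rtc ≤ p - 2 := Nat.sInf_le hmemc
    have hrt_eq : rtc = p - 2 := by
      by_contra hne
      have hmlt : rtc < p - 2 := by omega
      obtain ⟨hm1, hm2, hm3⟩ := Nat.sInf_mem
        (s := {ℓ : ℕ | ℓ < y.length ∧ PS y ℓ ℓ ∧ y[ℓ]? = c₀}) ⟨p-2, hmemc⟩
      have htm : PS t (rtc+1) rtc := (ps_drop (by omega) (by omega)).mpr
        ((ps_cast y (by omega) rfl).mp hm2)
      have hchm : t[rtc + 1 - 1 - rtc]? = t[rtc+1]? := by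
        calc t[rtc + 1 - 1 - rtc]? = t[0]? := gcast t (by omega)
          _ = t[p-1]? := hchar_tp
          _ = t[1 + (p-2)]? := gcast t (by omega)
          _ = y[p-2]? := List.getElem?_drop.symm
          _ = c₀ := hc₀.symm
          _ = y[rtc]? := hm3.symm
          _ = t[1 + rtc]? := List.getElem?_drop
          _ = t[rtc+1]? := gcast t (by omega)
      have hPSt : PS t (rtc+2) (rtc+2) := by
        have := (ps_extend t (rtc+1) rtc).mpr ⟨by omega, by omega, htm, hchm⟩
        exact (ps_cast t (by omega) rfl).mp this
      have hle2 : P ≤ ((rtc+2 : ℕ) : ℕ∞) := by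
        rw [hP]; exact natInf_le ⟨by omega, hPSt⟩
      have : p ≤ rtc + 2 := by rw [hp] at hle2; exact_mod_cast hle2
      omega
    -- translate groupIdOf into PS-language
    have hGS : {c' | c' ∈ palSufGroups y.reverse ∧ repLen y.reverse c' ≤ repLen y.reverse c₀}
        = {d : Option α | (∃ ℓ, ℓ < y.length ∧ PS y ℓ ℓ ∧ y[ℓ]? = d) ∧
            sInf {ℓ : ℕ | ℓ < y.length ∧ PS y ℓ ℓ ∧ y[ℓ]? = d} ≤ rtc} := by
      ext d
      simp only [Set.mem_setOf_eq, mem_palSufGroups_reverse, repLen_reverse, hrtc]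
    set GS : Set (Option α) := {d : Option α | (∃ ℓ, ℓ < y.length ∧ PS y ℓ ℓ ∧ y[ℓ]? = d) ∧
        sInf {ℓ : ℕ | ℓ < y.length ∧ PS y ℓ ℓ ∧ y[ℓ]? = d} ≤ rtc} with hGSdef
    have hG : piEnc t = ((GS.ncard : ℕ) : ℕ∞) := by
      rw [hpiv, groupIdOf, hGS]
    -- counting sets
    set St : Set (Option α) := {d : Option α | (∃ ℓ, ℓ < y.length ∧ PS y ℓ ℓ ∧ y[ℓ]? = d) ∧
        sInf {ℓ : ℕ | ℓ < y.length ∧ PS y ℓ ℓ ∧ y[ℓ]? = d} ≤ n - 1} with hStdef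
    set Sw : Set (Option α) := {d : Option α | ∃ ℓ, ℓ < n ∧ PS w ℓ ℓ ∧ w[ℓ]? = d} with hSwdef
    have hcnt : St.ncard = Sw.ncard := group_count rfl hn1 hny HT
    have hgSw : g = Sw.ncard := by
      rw [hg]
      congr 1
      ext d
      rw [mem_palSufGroups_reverse w d]
      rfl
    have hGt_fin : {d : Option α | ∃ ℓ, ℓ < y.length ∧ PS y ℓ ℓ ∧ y[ℓ]? = d}.Finite := by
      apply Set.Finite.subset ((Set.finite_Iio y.length).image (fun ℓ => y[ℓ]?))
      rintro d ⟨ℓ, h1, -, h3⟩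
      exact ⟨ℓ, h1, h3⟩
    have hSt_fin : St.Finite := hGt_fin.subset (fun d hd => hd.1)
    have hGS_fin : GS.Finite := hGt_fin.subset (fun d hd => hd.1)
    -- final comparison
    have hiff2 : ¬(P ≤ ((n + 1 : ℕ) : ℕ∞)) ↔ n + 2 ≤ p := by
      rw [hp]
      constructor
      · intro h
        by_contra hcon
        exact h (by exact_mod_cast (by omega : p ≤ n + 1))
      · intro h hle
        have : p ≤ n + 1 := by exact_mod_cast hle
        omega
    rw [hiff2, hG]
    have hcast : ((g : ℕ) : ℕ∞) < ((GS.ncard : ℕ) : ℕ∞) ↔ g < GS.ncard := by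
      exact_mod_cast Iff.rfl
    by_cases hcase : n + 2 ≤ p
    · apply iff_of_true hcase
      right
      rw [hcast]
      have hc₀Gt : c₀ ∈ {d : Option α | ∃ ℓ, ℓ < y.length ∧ PS y ℓ ℓ ∧ y[ℓ]? = d} :=
        ⟨p-2, hplt, hPSy, hc₀.symm⟩
      have hc₀GS : c₀ ∈ GS := ⟨hc₀Gt, le_refl _⟩
      have hc₀St : c₀ ∉ St := by
        rintro ⟨-, hle⟩
        rw [← hrtc, hrt_eq] at hle
        omega
      have hins : insert c₀ St ⊆ GS := by
        rintro d (rfl | hd)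
        · exact hc₀GS
        · exact ⟨hd.1, le_trans hd.2 (by rw [hrt_eq]; omega)⟩
      have h1 : St.ncard + 1 ≤ GS.ncard := by
        rw [← Set.ncard_insert_of_notMem hc₀St hSt_fin]
        exact Set.ncard_le_ncard hins hGS_fin
      omega
    · apply iff_of_false hcase
      rintro (htop | hlt)
      · exact (ENat.coe_ne_top _) htop
      rw [hcast] at hlt
      have hsub : GS ⊆ St := by
        rintro d ⟨hd1, hd2⟩
        rw [hrt_eq] at hd2
        exact ⟨hd1, le_trans hd2 (by omega)⟩
      have : GS.ncard ≤ St.ncard := Set.ncard_le_ncard hsub hSt_fin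
      omega
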